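/- Let ℓ ≥ 1, let λ₁, …, λ_ℓ be real numbers and c₁, …, c_ℓ be complex numbers, and define K(τ) = ∑_{k=1}^ℓ c_k e^{i τ λ_k} for τ ∈ ℝ. If K(τ) → 0 as τ → +∞, then K(τ) = 0 for all τ ∈ ℝ; in particular ∑_{k=1}^ℓ c_k = 0. -/

import Mathlib

open Complex MeasureTheory Metric Set Filter
open scoped Real Topology NNReal ComplexConjugate

noncomputable section

/-- The Laplacian of `u : ℂ → E`, computed via iterated directional (Fréchet) derivatives
in the real coordinate directions `1` and `I` of `ℂ ≅ ℝ²`. -/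
def lap2 {E : Type*} [NormedAddCommGroup E] [NormedSpace ℝ E] (u : ℂ → E) (x : ℂ) : E :=
  fderiv ℝ (fun y => fderiv ℝ u y 1) x 1 + fderiv ℝ (fun y => fderiv ℝ u y Complex.I) x Complex.I

/-- The Wirtinger derivative `∂/∂z = (1/2)(∂_{x₁} - i ∂_{x₂})`. -/
def dz (u : ℂ → ℂ) (x : ℂ) : ℂ :=
  (fderiv ℝ u x 1 - Complex.I * fderiv ℝ u x Complex.I) / 2

/-- The Wirtinger derivative `∂/∂z̄ = (1/2)(∂_{x₁} + i ∂_{x₂})`. -/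
def dzbar (u : ℂ → ℂ) (x : ℂ) : ℂ :=
  (fderiv ℝ u x 1 + Complex.I * fderiv ℝ u x Complex.I) / 2

/-- The normal derivative on the unit circle: the unit outer normal at `x ∈ S¹` is `x` itself. -/
def normalDeriv (u : ℂ → ℂ) (x : ℂ) : ℂ := fderiv ℝ u x x

/-- Membership in the Sobolev space `H¹(s)` (strong form): differentiable on `s`, and the
function together with its gradient are square integrable on `s`. -/
def MemH1 (s : Set ℂ) (u : ℂ → ℂ) : Prop :=
  (∀ x ∈ s, DifferentiableAt ℝ u x) ∧
  MemLp u 2 (volume.restrict s) ∧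
  MemLp (fun x => fderiv ℝ u x) 2 (volume.restrict s)

/-- The Hölder space `C^{1+ℓ}(s)` for some `0 < ℓ ≤ 1`: `C¹` with Hölder continuous
first derivative. -/
def HolderC1 (s : Set ℂ) (f : ℂ → ℂ) : Prop :=
  ∃ (ℓ C : ℝ≥0), 0 < ℓ ∧ ℓ ≤ 1 ∧ ContDiffOn ℝ 1 f s ∧
    HolderOnWith C ℓ (fun x => fderivWithin ℝ f s x) s

/-- The open boundary arc `{(cos θ, sin θ) : θ ∈ (-t, t)}` of the unit circle. -/
def arc (t : ℝ) : Set ℂ := (fun θ : ℝ => Complex.exp (θ * Complex.I)) '' Set.Ioo (-t) t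

/-- The set of partial Cauchy data for the Schrödinger operator `Δ + q` on the unit disc:
pairs of (Dirichlet data on `Γp`, Neumann data on `Γme`) of `H¹` solutions vanishing
on `Γm`. -/
def cauchyData (q : ℂ → ℂ) (Γp Γm Γme : Set ℂ) : Set ((ℂ → ℂ) × (ℂ → ℂ)) :=
  {fg | ∃ u : ℂ → ℂ, MemH1 (ball (0:ℂ) 1) u ∧
    (∀ x ∈ ball (0:ℂ) 1, lap2 u x + q x * u x = 0) ∧
    (∀ x ∈ Γm, u x = 0) ∧
    (∀ x ∈ Γp, fg.1 x = u x) ∧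
    (∀ x ∈ Γme, fg.2 x = normalDeriv u x)}

lemma norm_exp_I_mul_real' (τ l : ℝ) : ‖Complex.exp (Complex.I * (τ : ℂ) * (l : ℂ))‖ = 1 := by
  rw [show Complex.I * (τ : ℂ) * (l : ℂ) = ((τ * l : ℝ) : ℂ) * Complex.I by push_cast; ring]
  simpa using Complex.norm_exp_ofReal_mul_I (τ * l)

lemma strictMono_add_le' (φ : ℕ → ℕ) (h : StrictMono φ) (K N : ℕ) : φ K + N ≤ φ (K + N) := by
  induction N with
  | zero => simp
  | succ n ih =>
    have h2 : φ (K + n) < φ (K + (n + 1)) := h (by omega)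
    omega

/-- Recurrence: for any `ε > 0` and any `N`, there is `s ≥ N` with all
`e^{isλ_j}` within `ε` of `1`. -/
lemma exp_recurrence (ℓ : ℕ) (lam : Fin ℓ → ℝ) (ε : ℝ) (hε : 0 < ε) (N : ℕ) :
    ∃ s : ℕ, N ≤ s ∧ ∀ j, ‖Complex.exp (Complex.I * (s : ℂ) * (lam j : ℂ)) - 1‖ < ε := by
  set f : ℕ → Fin ℓ → ℂ := fun n j => Complex.exp (Complex.I * (n : ℂ) * (lam j : ℂ)) with hf
  have hfmem : ∀ n, f n ∈ Metric.closedBall (0 : Fin ℓ → ℂ) 1 := by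
    intro n
    rw [Metric.mem_closedBall, dist_zero_right]
    refine (pi_norm_le_iff_of_nonneg zero_le_one).mpr fun j => ?_
    exact le_of_eq (norm_exp_I_mul_real' n (lam j))
  obtain ⟨a, -, φ, hφ, hconv⟩ := (isCompact_closedBall (0 : Fin ℓ → ℂ) 1).tendsto_subseq hfmem
  rw [Metric.tendsto_atTop] at hconv
  obtain ⟨K, hK⟩ := hconv (ε / 2) (by positivity)
  have hle : φ K ≤ φ (K + N) := hφ.monotone (Nat.le_add_right _ _)
  refine ⟨φ (K + N) - φ K, ?_, ?_⟩
  · have := strictMono_add_le' φ hφ K N; omega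
  · intro j
    set s := φ (K + N) - φ K with hs
    have hcast : ((φ (K + N) : ℕ) : ℂ) = ((φ K : ℕ) : ℂ) + (s : ℂ) := by
      rw [hs, Nat.cast_sub hle]; push_cast; ring
    have hms : f (φ (K + N)) j = f (φ K) j * Complex.exp (Complex.I * (s : ℂ) * (lam j : ℂ)) := by
      simp only [hf]
      rw [← Complex.exp_add]
      congr 1
      rw [hcast]; ring
    have hdist : dist (f (φ (K + N)) j) (f (φ K) j) < ε := by
      calc dist (f (φ (K + N)) j) (f (φ K) j)
          ≤ dist (f (φ (K + N))) (f (φ K)) := dist_le_pi_dist _ _ j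
        _ ≤ dist (f (φ (K + N))) a + dist (f (φ K)) a := dist_triangle_right _ _ _
        _ < ε / 2 + ε / 2 := by
            have h1 := hK (K + N) (Nat.le_add_right _ _)
            have h2 := hK K le_rfl
            exact add_lt_add h1 h2
        _ = ε := by ring
    calc ‖Complex.exp (Complex.I * (s : ℂ) * (lam j : ℂ)) - 1‖
        = ‖f (φ K) j‖ * ‖Complex.exp (Complex.I * (s : ℂ) * (lam j : ℂ)) - 1‖ := by
          rw [show ‖f (φ K) j‖ = 1 from norm_exp_I_mul_real' _ _, one_mul]
      _ = ‖f (φ K) j * (Complex.exp (Complex.I * (s : ℂ) * (lam j : ℂ)) - 1)‖ := by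
          rw [norm_mul]
      _ = ‖f (φ (K + N)) j - f (φ K) j‖ := by rw [mul_sub, mul_one, ← hms]
      _ = dist (f (φ (K + N)) j) (f (φ K) j) := (dist_eq_norm _ _).symm
      _ < ε := hdist

/-- **Bohr's theorem for finite exponential sums**: a finite trigonometric sum
`K(τ) = ∑ c_k e^{iτλ_k}` with real frequencies that tends to `0` as `τ → +∞` vanishes
identically; in particular `∑ c_k = K(0) = 0`. -/
theorem exponential_sum_tendsto_zero_vanishes
    (ℓ : ℕ) (hℓ : 1 ≤ ℓ) (lam : Fin ℓ → ℝ) (c : Fin ℓ → ℂ)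
    (h : Filter.Tendsto
      (fun τ : ℝ => ∑ k : Fin ℓ, c k * Complex.exp (Complex.I * (τ : ℂ) * (lam k : ℂ)))
      Filter.atTop (nhds 0)) :
    (∀ τ : ℝ, ∑ k : Fin ℓ, c k * Complex.exp (Complex.I * (τ : ℂ) * (lam k : ℂ)) = 0)
    ∧ ∑ k : Fin ℓ, c k = 0 := by
  set Kf : ℝ → ℂ := fun τ : ℝ =>
    ∑ k : Fin ℓ, c k * Complex.exp (Complex.I * (τ : ℂ) * (lam k : ℂ)) with hKf
  have main : ∀ τ : ℝ, Kf τ = 0 := by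
    intro τ
    have h0 : ∀ ε > (0 : ℝ), ‖Kf τ‖ < ε := by
      intro ε hε
      rw [Metric.tendsto_atTop] at h
      obtain ⟨M, hM⟩ := h (ε / 2) (by positivity)
      set C : ℝ := ∑ k : Fin ℓ, ‖c k‖ with hC
      have hC0 : 0 ≤ C := Finset.sum_nonneg fun k _ => norm_nonneg _
      obtain ⟨s, hsN, hs⟩ :=
        exp_recurrence ℓ lam (ε / (2 * (C + 1))) (by positivity) ⌈M - τ⌉₊
      have hτs : M ≤ τ + (s : ℝ) := by
        have h1 : M - τ ≤ (⌈M - τ⌉₊ : ℝ) := Nat.le_ceil _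
        have h2 : ((⌈M - τ⌉₊ : ℕ) : ℝ) ≤ (s : ℝ) := Nat.cast_le.mpr hsN
        linarith
      have h1 : ‖Kf (τ + s)‖ < ε / 2 := by
        have := hM (τ + s) hτs
        rwa [dist_zero_right] at this
      have hsplit : Kf τ - Kf (τ + s) =
          ∑ k : Fin ℓ, c k * Complex.exp (Complex.I * (τ : ℂ) * (lam k : ℂ)) *
            (1 - Complex.exp (Complex.I * (s : ℂ) * (lam k : ℂ))) := by
        rw [hKf, ← Finset.sum_sub_distrib]
        refine Finset.sum_congr rfl fun k _ => ?_
        rw [show Complex.I * ((τ + (s : ℝ) : ℝ) : ℂ) * (lam k : ℂ)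
            = Complex.I * (τ : ℂ) * (lam k : ℂ) + Complex.I * (s : ℂ) * (lam k : ℂ) by
          push_cast; ring, Complex.exp_add]
        ring
      have h2 : ‖Kf τ - Kf (τ + s)‖ ≤ C * (ε / (2 * (C + 1))) := by
        rw [hsplit]
        calc ‖∑ k : Fin ℓ, c k * Complex.exp (Complex.I * (τ : ℂ) * (lam k : ℂ)) *
              (1 - Complex.exp (Complex.I * (s : ℂ) * (lam k : ℂ)))‖
            ≤ ∑ k : Fin ℓ, ‖c k * Complex.exp (Complex.I * (τ : ℂ) * (lam k : ℂ)) *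
              (1 - Complex.exp (Complex.I * (s : ℂ) * (lam k : ℂ)))‖ :=
              norm_sum_le _ _
          _ ≤ ∑ k : Fin ℓ, ‖c k‖ * (ε / (2 * (C + 1))) := by
              refine Finset.sum_le_sum fun k _ => ?_
              rw [norm_mul, norm_mul, norm_exp_I_mul_real', mul_one]
              refine mul_le_mul_of_nonneg_left ?_ (norm_nonneg _)
              rw [norm_sub_rev]
              exact le_of_lt (hs k)
          _ = C * (ε / (2 * (C + 1))) := by rw [← Finset.sum_mul]
      have h3 : C * (ε / (2 * (C + 1))) ≤ ε / 2 := by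
        have hle : C * (ε / (2 * (C + 1))) ≤ (C + 1) * (ε / (2 * (C + 1))) := by
          have hpos : 0 ≤ ε / (2 * (C + 1)) := by positivity
          nlinarith
        have heq : (C + 1) * (ε / (2 * (C + 1))) = ε / 2 := by
          field_simp
        linarith
      calc ‖Kf τ‖ ≤ ‖Kf τ - Kf (τ + s)‖ + ‖Kf (τ + s)‖ := by
            simpa using norm_add_le (Kf τ - Kf (τ + s)) (Kf (τ + s))
        _ < ε / 2 + ε / 2 := add_lt_add_of_le_of_lt (le_trans h2 h3) h1
        _ = ε := by ring
    have hle : ‖Kf τ‖ ≤ 0 := by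
      by_contra hpos
      push_neg at hpos
      exact absurd (h0 _ hpos) (lt_irrefl _)
    exact norm_le_zero_iff.mp hle
  refine ⟨main, ?_⟩
  have := main 0
  simpa [hKf] using this
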